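/- Let (Ω, μ) be a probability space, let A_c : Ω → M_n(ℝ) be measurable, and suppose there exist c ≥ 0 and 0 ≤ λ < 1 such that for μ-almost every ω and every natural number t, ‖A_c(ω)ᵗ‖ ≤ c·λᵗ (operator norm). Let M ∈ M_n(ℝ) be symmetric positive semidefinite. Then the map ω ↦ P(ω) := Σ_{t=0}^{∞} (A_c(ω)ᵀ)ᵗ M (A_c(ω))ᵗ is Bochner integrable, and for every x₀ ∈ ℝⁿ the expected infinite-horizon cost satisfies ∫ Σ_{t=0}^{∞} (A_c(ω)ᵗ x₀)ᵀ M (A_c(ω)ᵗ x₀) dμ(ω) = x₀ᵀ (∫ P(ω) dμ(ω)) x₀; in particular the expected cost-to-go is a quadratic function of x₀. -/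

import Mathlib

open Matrix MeasureTheory
open scoped Matrix.Norms.L2Operator

/-- If, almost surely, `‖A_c(ω)ᵗ‖ ≤ c·λᵗ` (operator norm) for all `t`, with `0 ≤ c`,
`0 ≤ λ < 1`, and `M` is symmetric positive semidefinite, then
`ω ↦ P(ω) := Σₜ (A_c(ω)ᵀ)ᵗ M A_c(ω)ᵗ` is Bochner integrable and the expected
infinite-horizon cost satisfies
`∫ Σₜ (A_c(ω)ᵗ x₀)ᵀ M (A_c(ω)ᵗ x₀) dμ = x₀ᵀ (∫ P dμ) x₀`; the expected cost-to-go is a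
quadratic function of `x₀`. -/
theorem stmt8 {Ω : Type*} [MeasurableSpace Ω] (μ : Measure Ω) [IsProbabilityMeasure μ]
    (n : ℕ) (Ac : Ω → Matrix (Fin n) (Fin n) ℝ)
    (hmeas : ∀ a b : Fin n, Measurable fun ω => Ac ω a b)
    (c lam : ℝ) (hc : 0 ≤ c) (hlam0 : 0 ≤ lam) (hlam1 : lam < 1)
    (hAc : ∀ᵐ ω ∂μ, ∀ t : ℕ, ‖Ac ω ^ t‖ ≤ c * lam ^ t)
    (M : Matrix (Fin n) (Fin n) ℝ) (hM : M.PosSemidef) :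
    Integrable (fun ω => ∑' t : ℕ, (Ac ω)ᵀ ^ t * M * Ac ω ^ t) μ ∧
      ∀ x₀ : Fin n → ℝ,
        ∫ ω, ∑' t : ℕ, (Ac ω ^ t *ᵥ x₀) ⬝ᵥ (M *ᵥ (Ac ω ^ t *ᵥ x₀)) ∂μ =
          x₀ ⬝ᵥ ((∫ ω, ∑' t : ℕ, (Ac ω)ᵀ ^ t * M * Ac ω ^ t ∂μ) *ᵥ x₀) := by
  classical
  set f : Ω → ℕ → Matrix (Fin n) (Fin n) ℝ :=
    fun ω t => (Ac ω)ᵀ ^ t * M * Ac ω ^ t with hf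
  -- norm bound on terms
  have hterm : ∀ ω, (∀ t : ℕ, ‖Ac ω ^ t‖ ≤ c * lam ^ t) →
      ∀ t : ℕ, ‖f ω t‖ ≤ (c * c * ‖M‖) * (lam * lam) ^ t := by
    intro ω hω t
    have h1 : ‖(Ac ω)ᵀ ^ t‖ = ‖Ac ω ^ t‖ := by
      rw [← Matrix.transpose_pow]
      rw [← Matrix.conjTranspose_eq_transpose_of_trivial]
      exact Matrix.l2_opNorm_conjTranspose _
    calc ‖f ω t‖ ≤ ‖(Ac ω)ᵀ ^ t * M‖ * ‖Ac ω ^ t‖ := norm_mul_le _ _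
      _ ≤ ‖(Ac ω)ᵀ ^ t‖ * ‖M‖ * ‖Ac ω ^ t‖ :=
          mul_le_mul_of_nonneg_right (norm_mul_le _ _) (norm_nonneg _)
      _ = ‖Ac ω ^ t‖ * ‖M‖ * ‖Ac ω ^ t‖ := by rw [h1]
      _ ≤ (c * lam ^ t) * ‖M‖ * (c * lam ^ t) := by
          have h0 : (0:ℝ) ≤ ‖Ac ω ^ t‖ := norm_nonneg _
          have hcl : (0:ℝ) ≤ c * lam ^ t := mul_nonneg hc (pow_nonneg hlam0 _)
          exact mul_le_mul (mul_le_mul_of_nonneg_right (hω t) (norm_nonneg _)) (hω t) h0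
            (mul_nonneg hcl (norm_nonneg _))
      _ = (c * c * ‖M‖) * (lam * lam) ^ t := by ring
  have hll : lam * lam < 1 := by nlinarith
  have hll0 : (0:ℝ) ≤ lam * lam := mul_nonneg hlam0 hlam0
  have hgeo : Summable (fun t : ℕ => (c * c * ‖M‖) * (lam * lam) ^ t) :=
    (summable_geometric_of_lt_one hll0 hll).mul_left _
  -- a.e. summability
  have hsum : ∀ᵐ ω ∂μ, Summable (f ω) := by
    filter_upwards [hAc] with ω hω
    exact Summable.of_norm_bounded hgeo (hterm ω hω)
  -- measurability
  letI instM : MeasurableSpace (Matrix (Fin n) (Fin n) ℝ) :=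
    inferInstanceAs (MeasurableSpace (Fin n → Fin n → ℝ))
  letI instB : BorelSpace (Matrix (Fin n) (Fin n) ℝ) :=
    inferInstanceAs (BorelSpace (Fin n → Fin n → ℝ))
  have hAmeas : Measurable Ac :=
    measurable_pi_lambda _ fun a => measurable_pi_lambda _ fun b => hmeas a b
  have hfmeas : ∀ t : ℕ, Measurable (fun ω => f ω t) := by
    intro t
    have hT : Continuous (fun A : Matrix (Fin n) (Fin n) ℝ => Aᵀ) :=
      Continuous.matrix_transpose continuous_id
    have : Continuous (fun A : Matrix (Fin n) (Fin n) ℝ => Aᵀ ^ t * M * A ^ t) :=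
      (((continuous_pow t).comp hT).mul continuous_const).mul (continuous_pow t)
    exact this.measurable.comp hAmeas
  have hSmeas : ∀ N : ℕ, StronglyMeasurable (fun ω => ∑ t ∈ Finset.range N, f ω t) := by
    intro N
    exact (Finset.measurable_sum _ fun t _ => hfmeas t).stronglyMeasurable
  have hPmeas : AEStronglyMeasurable (fun ω => ∑' t : ℕ, f ω t) μ := by
    refine aestronglyMeasurable_of_tendsto_ae Filter.atTop
      (fun N => (hSmeas N).aestronglyMeasurable) ?_
    filter_upwards [hsum] with ω hω
    exact hω.hasSum.tendsto_sum_nat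
  -- integrability
  have hPint : Integrable (fun ω => ∑' t : ℕ, f ω t) μ := by
    refine Integrable.mono' (integrable_const (∑' t : ℕ, (c * c * ‖M‖) * (lam * lam) ^ t))
      hPmeas ?_
    filter_upwards [hAc, hsum] with ω hω hsω
    have hn : Summable fun t : ℕ => ‖f ω t‖ :=
      Summable.of_nonneg_of_le (fun _ => norm_nonneg _) (hterm ω hω) hgeo
    calc ‖∑' t : ℕ, f ω t‖ ≤ ∑' t : ℕ, ‖f ω t‖ := norm_tsum_le_tsum_norm hn
      _ ≤ ∑' t : ℕ, (c * c * ‖M‖) * (lam * lam) ^ t := hn.tsum_le_tsum (hterm ω hω) hgeo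
  refine ⟨hPint, ?_⟩
  intro x₀
  -- the quadratic form as a continuous linear map
  let L : Matrix (Fin n) (Fin n) ℝ →ₗ[ℝ] ℝ :=
    { toFun := fun P => x₀ ⬝ᵥ (P *ᵥ x₀)
      map_add' := by intro P Q; simp [Matrix.add_mulVec, dotProduct_add]
      map_smul' := by intro r P; simp [Matrix.smul_mulVec, dotProduct_smul] }
  let Lc : Matrix (Fin n) (Fin n) ℝ →L[ℝ] ℝ :=
    { toLinearMap := L, cont := L.continuous_of_finiteDimensional }
  have hterm_eq : ∀ ω t, (Ac ω ^ t *ᵥ x₀) ⬝ᵥ (M *ᵥ (Ac ω ^ t *ᵥ x₀)) = Lc (f ω t) := by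
    intro ω t
    show _ = x₀ ⬝ᵥ (((Ac ω)ᵀ ^ t * M * Ac ω ^ t) *ᵥ x₀)
    rw [← Matrix.transpose_pow]
    rw [← Matrix.mulVec_mulVec, ← Matrix.mulVec_mulVec]
    rw [Matrix.dotProduct_mulVec x₀ ((Ac ω ^ t)ᵀ), Matrix.vecMul_transpose]
  have hae : (fun ω => ∑' t : ℕ, (Ac ω ^ t *ᵥ x₀) ⬝ᵥ (M *ᵥ (Ac ω ^ t *ᵥ x₀)))
      =ᵐ[μ] fun ω => Lc (∑' t : ℕ, f ω t) := by
    filter_upwards [hsum] with ω hω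
    simp_rw [hterm_eq ω]
    exact (Lc.map_tsum hω).symm
  rw [integral_congr_ae hae, Lc.integral_comp_comm hPint]
  rfl
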